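/- The operator φ_n = ε_ne ∘ δ_en is an (algebraic) closing on node weights: it is increasing (n ≤ n' implies φ_n n ≤ φ_n n'), extensive (n i ≤ (φ_n n) i for all vertices i), and idempotent (φ_n (φ_n n) = φ_n n). -/
import Mathlib


/-- The closing `φ_n = ε_ne ∘ δ_en` on node weights:
`(φ_n n) i` is the minimum over the neighbors `j` of `i` of `max (n i) (n j)`. -/
noncomputable def phiN {V : Type*} [Fintype V] (G : SimpleGraph V) [DecidableRel G.Adj]
    (h : ∀ i : V, ∃ j, G.Adj i j) (n : V → ℝ) (i : V) : ℝ :=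
  (G.neighborFinset i).inf'
    ⟨(h i).choose, by rw [SimpleGraph.mem_neighborFinset]; exact (h i).choose_spec⟩
    (fun j => max (n i) (n j))

/-- The operator `φ_n = ε_ne ∘ δ_en` is an algebraic closing on node weights:
it is increasing, extensive and idempotent. -/
theorem phiN_is_closing {V : Type*} [Fintype V] (G : SimpleGraph V)
    [DecidableRel G.Adj] (h : ∀ i : V, ∃ j, G.Adj i j) :
    (∀ n n' : V → ℝ, (∀ i, n i ≤ n' i) → ∀ i, phiN G h n i ≤ phiN G h n' i) ∧
    (∀ n : V → ℝ, ∀ i, n i ≤ phiN G h n i) ∧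
    (∀ n : V → ℝ, phiN G h (phiN G h n) = phiN G h n) := by
  have hmono : ∀ n n' : V → ℝ, (∀ i, n i ≤ n' i) → ∀ i, phiN G h n i ≤ phiN G h n' i := by
    intro n n' hle i
    apply Finset.le_inf'
    intro j hj
    exact le_trans (Finset.inf'_le _ hj) (max_le_max (hle i) (hle j))
  have hext : ∀ n : V → ℝ, ∀ i, n i ≤ phiN G h n i := by
    intro n i
    apply Finset.le_inf'
    intro j _
    exact le_max_left _ _
  refine ⟨hmono, hext, ?_⟩
  intro n
  funext i
  apply le_antisymm
  · -- pick j achieving the inf for phiN n i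
    obtain ⟨j, hj, hjeq⟩ := Finset.exists_mem_eq_inf' (s := G.neighborFinset i)
      ⟨(h i).choose, by rw [SimpleGraph.mem_neighborFinset]; exact (h i).choose_spec⟩
      (fun j => max (n i) (n j))
    have hiadj : j ∈ G.neighborFinset i := hj
    have hij : G.Adj i j := (SimpleGraph.mem_neighborFinset _ _ _).1 hj
    have hji : i ∈ G.neighborFinset j := by
      rw [SimpleGraph.mem_neighborFinset]; exact hij.symm
    have h1 : phiN G h n j ≤ max (n j) (n i) := Finset.inf'_le _ hji
    have h2 : phiN G h n j ≤ phiN G h n i :=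
      calc phiN G h n j ≤ n j ⊔ n i := h1
        _ = n i ⊔ n j := max_comm _ _
        _ = phiN G h n i := hjeq.symm
    calc phiN G h (phiN G h n) i ≤ max (phiN G h n i) (phiN G h n j) :=
          Finset.inf'_le _ hiadj
      _ = phiN G h n i := max_eq_left h2
  · exact hext _ i
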